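/- arXiv:math/0306148 — 3 statements merged into one kernel-verified Lean document; each statement's English description precedes it below -/
import Mathlib

section
/- Let R be a commutative ring, let L and W be ideals of R, let M be an ideal of R, and let x ∈ M. Assume L : x² = L : x, xW = (0), and L : x = L : M. Then for every integer n ≥ 2, (L + (xⁿ) + W) : M = (L + (xⁿ)) : M. -/
open Ideal IsLocalRing

/-- A sequence `x₁, …, x_s` is a `d`-sequence. -/
def IsDSeq {R : Type*} [CommRing R] {s : ℕ} (x : Fin s → R) : Prop :=
  ∀ i j : Fin s, i ≤ j →
    (Ideal.span (x '' {k | k < i})).colon (Ideal.span {x i}) =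
    (Ideal.span (x '' {k | k < i})).colon (Ideal.span {x i * x j})

/-- A strong `d`-sequence: all power sequences are `d`-sequences. -/
def IsStrongDSeq {R : Type*} [CommRing R] {s : ℕ} (x : Fin s → R) : Prop :=
  ∀ n : Fin s → ℕ, (∀ i, 1 ≤ n i) → IsDSeq (fun i => x i ^ n i)

/-- `x₁, …, x_d` is a system of parameters of the local ring `A`. -/
def IsSOP {A : Type*} [CommRing A] [IsLocalRing A] {d : ℕ} (x : Fin d → A) : Prop :=
  ringKrullDim A = d ∧ (Ideal.span (Set.range x)).radical = maximalIdeal A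

/-- `Q` is a parameter ideal: generated by a system of parameters. -/
def IsParameterIdeal (A : Type*) [CommRing A] [IsLocalRing A] (Q : Ideal A) : Prop :=
  ∃ (d : ℕ) (x : Fin d → A), IsSOP x ∧ Q = Ideal.span (Set.range x)

/-- A Buchsbaum local ring: every system of parameters is a weak `A`-sequence. -/
def IsBuchsbaum (A : Type*) [CommRing A] [IsLocalRing A] : Prop :=
  ∀ (d : ℕ) (x : Fin d → A), IsSOP x →
    ∀ i : Fin d,
      (Ideal.span (x '' {k | k < i})).colon (Ideal.span {x i}) =
      (Ideal.span (x '' {k | k < i})).colon (maximalIdeal A)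

/-- The 0-th local cohomology `H⁰_𝔪(A)`, as the ideal of elements killed by a power of `𝔪`. -/
noncomputable def H0 (A : Type*) [CommRing A] [IsLocalRing A] : Ideal A :=
  ⨆ n : ℕ, (⊥ : Ideal A).colon (((maximalIdeal A) ^ n : Ideal A) : Set A)

/-- The length of a module, as the Krull dimension of its submodule lattice (valued in `ℕ∞`). -/
noncomputable def moduleLength (R M : Type*) [Ring R] [AddCommGroup M] [Module R M] : ℕ∞ :=
  WithBot.unbotD 0 (Order.krullDim (Submodule R M))

/-- `ℓ_A(I/Q)`: the length of `I/Q`. -/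
noncomputable def quotLength {A : Type*} [CommRing A] (Q I : Ideal A) : ℕ∞ :=
  moduleLength (A ⧸ Q) (I.map (Ideal.Quotient.mk Q))

/-- `r(A)`: the supremum of the indices of reducibility of parameter ideals. -/
noncomputable def typeR (A : Type*) [CommRing A] [IsLocalRing A] : ℕ∞ :=
  ⨆ Q ∈ {Q : Ideal A | IsParameterIdeal A Q}, quotLength Q (Q.colon (maximalIdeal A))

/-- The reduction number `r_Q(I) = min{n ≥ 0 ∣ I^{n+1} = Q Iⁿ}`. -/
noncomputable def reductionNumber {A : Type*} [CommRing A] (Q I : Ideal A) : ℕ :=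
  sInf {n : ℕ | I ^ (n + 1) = Q * I ^ n}

/-- `x` is integral over the ideal `Q`. -/
def IsIntegralOverIdeal {A : Type*} [CommRing A] (Q : Ideal A) (x : A) : Prop :=
  ∃ n : ℕ, 0 < n ∧ ∃ c : ℕ → A, (∀ i ∈ Finset.Icc 1 n, c i ∈ Q ^ i) ∧
    x ^ n + ∑ i ∈ Finset.Icc 1 n, c i * x ^ (n - i) = 0

/-- `A` has Hilbert–Samuel multiplicity `e` (with respect to its maximal ideal). -/
def HasHSMultiplicity (A : Type*) [CommRing A] [IsLocalRing A] (e : ℕ) : Prop :=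
  ∃ d : ℕ, ringKrullDim A = d ∧
    Filter.Tendsto
      (fun n : ℕ =>
        ((d.factorial : ℝ) * ((moduleLength A (A ⧸ (maximalIdeal A) ^ n)).toNat : ℝ)) / (n : ℝ) ^ d)
      Filter.atTop (nhds (e : ℝ))

/-- The local ring `A` has depth `n`. -/
def HasDepth (A : Type*) [CommRing A] [IsLocalRing A] (n : ℕ) : Prop :=
  (∃ rs : List A, rs.length = n ∧ (∀ a ∈ rs, a ∈ maximalIdeal A) ∧
      RingTheory.Sequence.IsRegular A rs) ∧
    ∀ rs : List A, (∀ a ∈ rs, a ∈ maximalIdeal A) → RingTheory.Sequence.IsRegular A rs →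
      rs.length ≤ n

theorem stmt1 {R : Type*} [CommRing R] (L W M : Ideal R) (x : R) (hx : x ∈ M)
    (hcolon : L.colon (Ideal.span {x ^ 2}) = L.colon (Ideal.span {x}))
    (hxW : ∀ w ∈ W, x * w = 0)
    (hLM : L.colon (Ideal.span {x}) = L.colon M) (n : ℕ) (hn : 2 ≤ n) :
    (L + Ideal.span {x ^ n} + W).colon M = (L + Ideal.span {x ^ n}).colon M := by
  -- from L : x² = L : x we get L : xᵏ⁺¹ = L : x
  have key : ∀ (k : ℕ) (t : R), ∀ _ : t * x ^ (k + 1) ∈ L, t * x ∈ L := by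
    intro k
    induction k with
    | zero => intro t ht; rwa [pow_one] at ht
    | succ k ih =>
      intro t ht
      have h2 : t * x ^ k * x ^ 2 ∈ L := by
        have : t * x ^ k * x ^ 2 = t * x ^ (k + 1 + 1) := by ring
        rwa [this]
      have h3 : t * x ^ k ∈ L.colon (Ideal.span {x ^ 2}) :=
        Ideal.mem_colon_span_singleton.mpr h2
      rw [hcolon] at h3
      have h4 : t * x ^ k * x ∈ L := Ideal.mem_colon_span_singleton.mp h3
      exact ih t (by rwa [show t * x ^ (k + 1) = t * x ^ k * x by ring])
  have hLMmem : ∀ t : R, t * x ∈ L → ∀ m ∈ M, t * m ∈ L := by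
    intro t ht m hm
    have : t ∈ L.colon M := by
      rw [← hLM]; exact Ideal.mem_colon_span_singleton.mpr ht
    simpa [smul_eq_mul] using Submodule.mem_colon.mp this m hm
  obtain ⟨k, rfl⟩ : ∃ k, n = k + 2 := ⟨n - 2, by omega⟩
  apply le_antisymm
  · intro r hr
    -- decompose r * x
    have hrx : r * x ∈ L + Ideal.span {x ^ (k + 2)} + W := by
      simpa [smul_eq_mul] using Submodule.mem_colon.mp hr x hx
    obtain ⟨y, hy, w₀, hw₀, hyz⟩ := Submodule.mem_sup.mp hrx
    obtain ⟨l₀, hl₀, u, hu, hlu⟩ := Submodule.mem_sup.mp hy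
    obtain ⟨a₀, rfl⟩ := Ideal.mem_span_singleton'.mp hu
    have hxw₀ : x * w₀ = 0 := hxW w₀ hw₀
    have hr_eq : r * x = l₀ + a₀ * x ^ (k + 2) + w₀ := by rw [← hyz, ← hlu]
    -- s := r - a₀ x^(k+1) kills M into L
    set s : R := r - a₀ * x ^ (k + 1) with hs
    have hsx2 : s * x ^ 2 ∈ L := by
      have heq : s * x ^ 2 = l₀ * x := by
        rw [hs]; linear_combination x * hr_eq + hxw₀
      rw [heq]; exact L.mul_mem_right x hl₀
    have hsM : ∀ m ∈ M, s * m ∈ L := by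
      have h3 : s ∈ L.colon (Ideal.span {x ^ 2}) := Ideal.mem_colon_span_singleton.mpr hsx2
      rw [hcolon] at h3
      exact hLMmem s (Ideal.mem_colon_span_singleton.mp h3)
    have hw₀M : ∀ m ∈ M, w₀ * m ∈ L := by
      refine hLMmem w₀ ?_
      rw [show w₀ * x = x * w₀ by ring, hxw₀]; exact L.zero_mem
    -- now show r * m ∈ L + (x^(k+2)) for m ∈ M
    rw [Submodule.mem_colon]
    intro m hm
    have hrm : r * m ∈ L + Ideal.span {x ^ (k + 2)} + W := by
      simpa [smul_eq_mul] using Submodule.mem_colon.mp hr m hm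
    obtain ⟨y₁, hy₁, w₁, hw₁, hyz₁⟩ := Submodule.mem_sup.mp hrm
    obtain ⟨l₁, hl₁, u₁, hu₁, hlu₁⟩ := Submodule.mem_sup.mp hy₁
    obtain ⟨a₁, rfl⟩ := Ideal.mem_span_singleton'.mp hu₁
    have hxw₁ : x * w₁ = 0 := hxW w₁ hw₁
    have hrm_eq : r * m = l₁ + a₁ * x ^ (k + 2) + w₁ := by rw [← hyz₁, ← hlu₁]
    -- a₀ x^(k+2) m ∈ L + (x^(k+3))
    have hkey : (a₀ * m - a₁ * x) * x ^ (k + 2) ∈ L := by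
      have heq : (a₀ * m - a₁ * x) * x ^ (k + 2) =
          l₁ * x - l₀ * m - w₀ * m + (x * w₁) + m * (x * w₀) := by
        linear_combination x * hrm_eq - m * hr_eq - m * hxw₀
      rw [heq, hxw₁, hxw₀]
      have : l₁ * x - l₀ * m - w₀ * m ∈ L :=
        L.sub_mem (L.sub_mem (L.mul_mem_right x hl₁) (L.mul_mem_right m hl₀))
          (hw₀M m hm)
      simpa using this
    have h5 : (a₀ * m - a₁ * x) * x ∈ L := key (k + 1) _ hkey
    have h6 : (a₀ * m - a₁ * x) * x ^ (k + 1) ∈ L := by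
      have hxk : x ^ (k + 1) ∈ M := M.pow_mem_of_mem hx (k + 1) (by omega)
      exact hLMmem _ h5 _ hxk
    -- assemble
    have hfinal : r * m = (s * m + (a₀ * m - a₁ * x) * x ^ (k + 1)) + a₁ * x ^ (k + 2) := by
      rw [hs]; ring
    rw [smul_eq_mul, hfinal]
    exact Submodule.mem_sup.mpr ⟨_, L.add_mem (hsM m hm) h6, _,
      Ideal.mem_span_singleton'.mpr ⟨a₁, rfl⟩, rfl⟩
  · intro r hr
    rw [Submodule.mem_colon] at hr ⊢
    intro m hm
    exact Submodule.mem_sup.mpr ⟨_, hr m hm, 0, W.zero_mem, by simp⟩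
end

section
/- Let (A, 𝔪) be a Buchsbaum local ring of dimension d ≥ 2 and let a ∈ 𝔪 with dim A/(a) = d − 1. Then r(A/(a)) ≤ r(A), where for a Buchsbaum local ring B, r(B) = sup over parameter ideals Q of B of the length of (Q : 𝔪_B)/Q. -/
open Ideal IsLocalRing

section Aux

variable {R S : Type*} [CommRing R] [CommRing S]

/-- The order isomorphism on subideals induced by a ring isomorphism. -/
def RingEquiv.subIdealOrderIso (e : R ≃+* S) (K : Ideal R) :
    {p : Ideal R // p ≤ K} ≃o {q : Ideal S // q ≤ K.map (e : R →+* S)} where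
  toFun p := ⟨p.1.comap (e.symm : S →+* R), by
    rw [Ideal.map_comap_of_equiv]; exact Ideal.comap_mono p.2⟩
  invFun q := ⟨q.1.comap (e : R →+* S), by
    intro x hx
    have h2 := q.2 hx
    rw [Ideal.map_comap_of_equiv] at h2
    simpa using h2⟩
  left_inv p := by
    apply Subtype.ext
    ext x
    simp [Ideal.mem_comap]
  right_inv q := by
    apply Subtype.ext
    ext x
    simp only [Ideal.mem_comap, RingEquiv.coe_toRingHom]
    constructor
    · intro h; simpa using h
    · intro h; simpa using h
  map_rel_iff' := by
    intro p q
    rw [Subtype.mk_le_mk]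
    constructor
    · intro h x hx
      have hx' : e x ∈ (p : Ideal R).comap (e.symm : S →+* R) := by
        simpa [Ideal.mem_comap] using hx
      simpa [Ideal.mem_comap] using h hx'
    · intro h
      exact Ideal.comap_mono h

lemma moduleLength_map_ringEquiv (e : R ≃+* S) (K : Ideal R) :
    moduleLength R K = moduleLength S (K.map (e : R →+* S)) := by
  unfold moduleLength
  congr 1
  exact Order.krullDim_eq_of_orderIso
    (((Submodule.MapSubtype.orderIso K).trans (e.subIdealOrderIso K)).trans
      (Submodule.MapSubtype.orderIso (K.map (e : R →+* S))).symm)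

lemma quotLength_map_quot {A : Type*} [CommRing A] (J Q I : Ideal A) (hJQ : J ≤ Q) :
    quotLength (Q.map (Ideal.Quotient.mk J)) (I.map (Ideal.Quotient.mk J)) = quotLength Q I := by
  classical
  set e := DoubleQuot.quotQuotEquivQuotOfLE hJQ with he
  have hmap : Ideal.map (e : _ →+* _)
      ((I.map (Ideal.Quotient.mk J)).map (Ideal.Quotient.mk (Q.map (Ideal.Quotient.mk J)))) =
      I.map (Ideal.Quotient.mk Q) := by
    rw [Ideal.map_map, Ideal.map_map]
    congr 1
  unfold quotLength
  rw [moduleLength_map_ringEquiv e, hmap]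

end Aux

theorem stmt11 {A : Type*} [CommRing A] [IsLocalRing A] [IsNoetherianRing A]
    (hB : IsBuchsbaum A) {d : ℕ} (hd : 2 ≤ d) (hdim : ringKrullDim A = d)
    (a : A) (ha : a ∈ maximalIdeal A)
    [IsLocalRing (A ⧸ Ideal.span {a})]
    (hdim' : ringKrullDim (A ⧸ Ideal.span {a}) = ((d - 1 : ℕ) : WithBot ℕ∞)) :
    typeR (A ⧸ Ideal.span {a}) ≤ typeR A := by
  classical
  set J : Ideal A := Ideal.span {a} with hJ
  set B := A ⧸ J
  set π : A →+* B := Ideal.Quotient.mk J with hπ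
  have hπs : Function.Surjective π := Ideal.Quotient.mk_surjective
  have hmax : (maximalIdeal B).comap π = maximalIdeal A := by
    haveI := IsLocalRing.maximalIdeal.isMaximal B
    exact IsLocalRing.eq_maximalIdeal
      (Ideal.comap_isMaximal_of_surjective π hπs (K := maximalIdeal B))
  refine iSup₂_le fun Q' hQ' => ?_
  obtain ⟨d', x', ⟨hdB, hrad⟩, hQ'eq⟩ := hQ'
  -- dimension count
  have hd' : d' + 1 = d := by
    have h1 : ((d' : ℕ∞) : WithBot ℕ∞) = (((d - 1 : ℕ) : ℕ∞) : WithBot ℕ∞) := by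
      exact_mod_cast hdB.symm.trans hdim'
    have h2 : (d' : ℕ∞) = ((d - 1 : ℕ) : ℕ∞) := WithBot.coe_inj.mp h1
    have h3 : d' = d - 1 := by exact_mod_cast h2
    omega
  -- the preimage ideal
  set Q : Ideal A := Q'.comap π with hQdef
  have hJQ : J ≤ Q := by
    intro z hz
    have : π z = 0 := by
      simpa [hπ] using (Ideal.Quotient.eq_zero_iff_mem).mpr hz
    simp [hQdef, Ideal.mem_comap, this]
  have hmapQ : Q.map π = Q' := Ideal.map_comap_of_surjective π hπs Q'
  -- lifts of the parameters
  set xl : Fin d' → A := fun i => (hπs (x' i)).choose with hxl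
  have hxl_spec : ∀ i, π (xl i) = x' i := fun i => (hπs (x' i)).choose_spec
  set y : Fin d → A := fun i =>
    if h : (i : ℕ) = 0 then a else xl ⟨(i : ℕ) - 1, by have := i.isLt; omega⟩ with hy
  have hrange : Set.range y = insert a (Set.range xl) := by
    ext z
    constructor
    · rintro ⟨i, rfl⟩
      by_cases h : (i : ℕ) = 0
      · left; simp [hy, h]
      · right; simp only [hy, h, dif_neg, not_false_iff]; exact Set.mem_range_self _
    · rintro (rfl | ⟨j, rfl⟩)
      · exact ⟨⟨0, by omega⟩, by simp [hy]⟩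
      · refine ⟨⟨(j : ℕ) + 1, by have := j.isLt; omega⟩, ?_⟩
        simp only [hy]
        rw [dif_neg (by simp)]
  -- span of y equals Q
  have hmapy : (Ideal.span (Set.range y)).map π = Q' := by
    rw [Ideal.map_span, hrange, Set.image_insert_eq]
    have h0 : π a = 0 := (Ideal.Quotient.eq_zero_iff_mem).mpr
      (Ideal.subset_span (Set.mem_singleton a))
    have h1 : ⇑π '' Set.range xl = Set.range x' := by
      rw [← Set.range_comp]
      have hc : ⇑π ∘ xl = x' := funext hxl_spec
      rw [hc]
    rw [h0, h1]
    have h2 : Ideal.span (insert (0 : B) (Set.range x')) = Ideal.span (Set.range x') :=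
      Submodule.span_insert_zero
    rw [h2, ← hQ'eq]
  have hspanQ : Ideal.span (Set.range y) = Q := by
    have h1 : (Ideal.span (Set.range y)).map π = Q.map π := by rw [hmapQ, hmapy]
    have h2 : Q'.comap π = Ideal.span (Set.range y) ⊔ (RingHom.ker π) := by
      rw [← hmapy]
      exact Ideal.comap_map_of_surjective π hπs _
    have hker : RingHom.ker π = J := Ideal.mk_ker
    have haJ : J ≤ Ideal.span (Set.range y) := by
      rw [hJ, Ideal.span_le]
      intro z hz
      rw [Set.mem_singleton_iff] at hz
      subst hz
      apply Ideal.subset_span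
      rw [hrange]
      exact Set.mem_insert _ _
    rw [hQdef, h2, hker, sup_eq_left.mpr haJ]
  -- Q is a parameter ideal of A
  have hrady : Q.radical = maximalIdeal A := by
    rw [hQdef, ← Ideal.comap_radical, hQ'eq, hrad, hmax]
  have hQparam : IsParameterIdeal A Q := by
    refine ⟨d, y, ⟨hdim, ?_⟩, hspanQ.symm⟩
    rw [hspanQ]; exact hrady
  -- colon correspondence
  have hcolon : Q'.colon (maximalIdeal B) = (Q.colon (maximalIdeal A)).map π := by
    apply le_antisymm
    · intro t ht
      obtain ⟨r, rfl⟩ := hπs t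
      refine Ideal.mem_map_of_mem π ?_
      rw [Submodule.mem_colon]
      intro s hs
      have hπs' : π s ∈ maximalIdeal B := by rw [← hmax] at hs; exact hs
      have := Submodule.mem_colon.mp ht (π s) hπs'
      rw [smul_eq_mul, ← _root_.map_mul] at this
      have : r * s ∈ Q := by rw [hQdef, Ideal.mem_comap]; exact this
      simpa [smul_eq_mul] using this
    · rw [Ideal.map_le_iff_le_comap]
      intro r hr
      rw [Ideal.mem_comap, Submodule.mem_colon]
      intro sb hsb
      obtain ⟨s, rfl⟩ := hπs sb
      have hs : s ∈ maximalIdeal A := by rw [← hmax]; exact hsb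
      have := Submodule.mem_colon.mp hr s hs
      rw [smul_eq_mul] at this
      have h2 : π (r * s) ∈ Q.map π := Ideal.mem_map_of_mem π this
      rw [hmapQ] at h2
      simpa [smul_eq_mul, _root_.map_mul] using h2
  -- conclude
  have hlen : quotLength Q' (Q'.colon (maximalIdeal B)) =
      quotLength Q (Q.colon (maximalIdeal A)) := by
    rw [hcolon, ← hmapQ]
    exact quotLength_map_quot J Q (Q.colon (maximalIdeal A)) hJQ
  rw [hlen]
  exact le_iSup₂ (f := fun (Q : Ideal A) (_ : Q ∈ {Q : Ideal A | IsParameterIdeal A Q}) =>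
    quotLength Q (Q.colon (maximalIdeal A))) Q hQparam
end

section
/- Let (A, 𝔪) be a one-dimensional Buchsbaum local ring, let Q = (a) be a parameter ideal, I = Q : 𝔪, and for n ≥ 0 set I_n = I^{n+1} : aⁿ. If e(A) > 1 and I_n = I_{n+1} for some n ≥ 0, then I^{n+2} = Q I^{n+1}. -/
open Ideal IsLocalRing

section AuxStmt14

section Count

variable {α : Type*} [Lattice α] [IsModularLattice α]

lemma filt_sep {F : ℕ → α} (hF : ∀ j, F j ≤ F (j + 1)) {P Q : α} (hPQ : P ≤ Q)
    (h0 : P ⊓ F 0 = Q ⊓ F 0) (L : ℕ)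
    (hstep : ∀ j < L, (P ⊓ F (j + 1)) ⊔ F j = (Q ⊓ F (j + 1)) ⊔ F j) :
    P ⊓ F L = Q ⊓ F L := by
  induction L with
  | zero => exact h0
  | succ L ih =>
    have IH : P ⊓ F L = Q ⊓ F L := ih (fun j hj => hstep j (by omega))
    refine le_antisymm (inf_le_inf_right _ hPQ) ?_
    have hx : P ⊓ F (L + 1) ≤ Q ⊓ F (L + 1) := inf_le_inf_right _ hPQ
    have h1 : Q ⊓ F (L + 1) ≤ (P ⊓ F (L + 1)) ⊔ F L := by
      rw [hstep L (Nat.lt_succ_self L)]; exact le_sup_left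
    have hmod : ((P ⊓ F (L + 1)) ⊔ F L) ⊓ (Q ⊓ F (L + 1)) =
        (P ⊓ F (L + 1)) ⊔ (F L ⊓ (Q ⊓ F (L + 1))) :=
      sup_inf_assoc_of_le _ hx
    have h2 : F L ⊓ (Q ⊓ F (L + 1)) = P ⊓ F L := by
      rw [inf_comm Q, ← inf_assoc, inf_eq_left.mpr (hF L), inf_comm, IH]
    have h3 : Q ⊓ F (L + 1) = (P ⊓ F (L + 1)) ⊔ (P ⊓ F L) := by
      rw [← h2, ← hmod]
      exact (inf_eq_right.mpr h1).symm
    rw [h3]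
    exact sup_le le_rfl (le_inf inf_le_left ((inf_le_right).trans (hF L)))

lemma chain_count {L c : ℕ} (F X : ℕ → α)
    (hF : ∀ j, F j ≤ F (j + 1))
    (hsimple : ∀ j < L, ∀ K, F j ≤ K → K ≤ F (j + 1) → K = F j ∨ K = F (j + 1))
    (hX : ∀ i < c, X i < X (i + 1))
    (hbot : ∀ i ≤ c, F 0 ≤ X i) (htop : ∀ i ≤ c, X i ≤ F L) : c ≤ L := by
  have hXmono : ∀ i i', i ≤ i' → i' ≤ c → X i ≤ X i' := by
    intro i i' hii'
    induction i', hii' using Nat.le_induction with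
    | base => exact fun _ => le_rfl
    | succ k hk ih => exact fun hc => (ih (by omega)).trans (hX k (by omega)).le
  set G : ℕ → ℕ → α := fun i j => (X i ⊓ F (j + 1)) ⊔ F j with hG
  have hGmono : ∀ j i i', i ≤ i' → i' ≤ c → G i j ≤ G i' j := by
    intro j i i' h1 h2
    exact sup_le_sup_right (inf_le_inf_right _ (hXmono i i' h1 h2)) _
  have hGband : ∀ i j, i ≤ c → F j ≤ G i j ∧ G i j ≤ F (j + 1) := by
    intro i j hi
    exact ⟨le_sup_right, sup_le inf_le_right (hF j)⟩
  have hex : ∀ i < c, ∃ j < L, G i j < G (i + 1) j := by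
    intro i hi
    by_contra hcon
    push_neg at hcon
    have heq : ∀ j < L, (X i ⊓ F (j + 1)) ⊔ F j = (X (i + 1) ⊓ F (j + 1)) ⊔ F j := by
      intro j hj
      exact ((hGmono j i (i + 1) (by omega) (by omega)).lt_or_eq).resolve_left (hcon j hj)
    have hsep := filt_sep hF (hX i hi).le
      (by rw [inf_eq_right.mpr (hbot i (by omega)), inf_eq_right.mpr (hbot (i+1) (by omega))])
      L heq
    rw [inf_eq_left.mpr (htop i (by omega)), inf_eq_left.mpr (htop (i+1) (by omega))] at hsep
    exact absurd hsep (hX i hi).ne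
  choose! jf hjL hjs using hex
  have hinj : ∀ i₁ < c, ∀ i₂ < c, i₁ < i₂ → jf i₁ ≠ jf i₂ := by
    intro i₁ h₁ i₂ h₂ h12 hEq
    have hs₁ : G i₁ (jf i₁) < G (i₁ + 1) (jf i₁) := hjs i₁ h₁
    have hs₂ : G i₂ (jf i₁) < G (i₂ + 1) (jf i₁) := by rw [hEq]; exact hjs i₂ h₂
    generalize hj : jf i₁ = j at hs₁ hs₂
    have hL : j < L := hj ▸ hjL i₁ h₁
    have hKtop : G (i₁ + 1) j = F (j + 1) := by
      rcases hsimple j hL (G (i₁ + 1) j) (hGband (i₁+1) j (by omega)).1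
        (hGband (i₁+1) j (by omega)).2 with hbotc | htopc
      · exact absurd (hs₁.trans_le (hbotc.le)) (not_lt_of_ge (hGband i₁ j (by omega)).1)
      · exact htopc
    have : F (j + 1) ≤ G i₂ j := hKtop ▸ hGmono j (i₁ + 1) i₂ (by omega) (by omega)
    exact absurd (hs₂.trans_le (hGband (i₂+1) j (by omega)).2) (not_lt_of_ge this)
  have hinj' : Function.Injective (fun i : Fin c => (⟨jf i, hjL i i.2⟩ : Fin L)) := by
    intro i₁ i₂ hEq
    simp only [Fin.mk.injEq] at hEq
    by_contra hne
    rcases lt_or_gt_of_ne (fun h : (i₁ : Fin c) = i₂ => hne h) with hlt | hgt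
    · exact hinj i₁ i₁.2 i₂ i₂.2 hlt hEq
    · exact hinj i₂ i₂.2 i₁ i₁.2 hgt hEq.symm
  simpa using Fintype.card_le_of_injective _ hinj'

end Count


section P2
variable {A : Type*} [CommRing A] [IsLocalRing A]

lemma simple_interval (Fj Fj1 : Ideal A) (v : A)
    (hcyc : Fj1 ≤ Fj ⊔ Ideal.span {v}) (hkill : ∀ r ∈ maximalIdeal A, r * v ∈ Fj)
    (K : Ideal A) (h1 : Fj ≤ K) (h2 : K ≤ Fj1) : K = Fj ∨ K = Fj1 := by
  by_cases hK : K ≤ Fj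
  · exact Or.inl (le_antisymm hK h1)
  · right
    obtain ⟨x, hxK, hxF⟩ := SetLike.not_le_iff_exists.mp hK
    obtain ⟨f, hf, t, ht, hft⟩ := Submodule.mem_sup.mp (hcyc (h2 hxK))
    obtain ⟨cc, rfl⟩ := Ideal.mem_span_singleton'.mp ht
    have hcu : cc ∉ maximalIdeal A := by
      intro hc
      exact hxF (hft ▸ Submodule.add_mem _ hf (hkill cc hc))
    obtain ⟨u, rfl⟩ := IsLocalRing.notMem_maximalIdeal.mp hcu
    have hvK : v ∈ K := by
      have hcv : (u : A) * v ∈ K := by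
        have : (u : A) * v = x - f := by rw [← hft]; ring
        rw [this]
        exact Submodule.sub_mem _ hxK (h1 hf)
      have : v = (u⁻¹ : Aˣ) * ((u : A) * v) := by
        rw [← mul_assoc, Units.inv_mul, one_mul]
      rw [this]
      exact Ideal.mul_mem_left _ _ hcv
    refine le_antisymm h2 (hcyc.trans (sup_le h1 ?_))
    rwa [Ideal.span_singleton_le_iff_mem]

lemma buchs_ann {A : Type*} [CommRing A] [IsLocalRing A]
    (hB : IsBuchsbaum A) (hdim : ringKrullDim A = 1) {b : A}
    (hrad : (Ideal.span {b}).radical = maximalIdeal A) :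
    (⊥ : Ideal A).colon (Ideal.span {b}) = (⊥ : Ideal A).colon (maximalIdeal A) := by
  have hsop : IsSOP (fun _ : Fin 1 => b) := by
    constructor
    · rw [hdim]; norm_num
    · rw [Set.range_const]; exact hrad
  have := hB 1 (fun _ : Fin 1 => b) hsop 0
  have hempty : {k : Fin 1 | k < 0} = (∅ : Set (Fin 1)) := by
    ext k; simp [Fin.lt_def, Fin.val_eq_zero]
  rw [hempty, Set.image_empty, Ideal.span_empty] at this
  exact this

lemma dim0_absurd {A : Type*} [CommRing A] [IsLocalRing A]
    (hdim : ringKrullDim A = 1) (h2 : (maximalIdeal A) ^ 2 = ⊥) : False := by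
  have hsub : Subsingleton (PrimeSpectrum A) := by
    constructor
    intro P Q
    have key : ∀ R : PrimeSpectrum A, R.asIdeal = maximalIdeal A := by
      intro R
      refine le_antisymm (IsLocalRing.le_maximalIdeal R.isPrime.ne_top) ?_
      intro x hx
      have : x * x ∈ R.asIdeal := by
        have : x * x ∈ (maximalIdeal A) ^ 2 := by
          rw [pow_two]; exact Ideal.mul_mem_mul hx hx
        rw [h2] at this
        simpa using (Submodule.mem_bot A).mp this ▸ R.asIdeal.zero_mem
      rcases R.isPrime.mem_or_mem this with h | h <;> exact h
    exact PrimeSpectrum.ext (by rw [key P, key Q])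
  have : ringKrullDim A ≤ 0 := Order.krullDim_nonpos_of_subsingleton
  rw [hdim] at this
  norm_num at this

end P2

section P3
variable {A : Type*} [CommRing A] [IsLocalRing A] [IsNoetherianRing A]

lemma unbot'_toNat_le {x : WithBot ℕ∞} {k : ℕ} (h : x ≤ ((k : ℕ∞) : WithBot ℕ∞)) :
    (WithBot.unbotD 0 x).toNat ≤ k := by
  cases x with
  | bot => simp
  | coe y =>
    rw [WithBot.unbotD_coe]
    exact ENat.toNat_le_of_le_coe (WithBot.coe_le_coe.mp h)

lemma length_bound (m : A) (hm : m ∈ maximalIdeal A)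
    (hWm : (⊥ : Ideal A).colon (maximalIdeal A) ≤ maximalIdeal A)
    (hW : maximalIdeal A ≤ Ideal.span {m} ⊔ (⊥ : Ideal A).colon (maximalIdeal A)) :
    ∃ ℓ : ℕ, ∀ N, 2 ≤ N →
      (moduleLength A (A ⧸ (maximalIdeal A) ^ N)).toNat ≤ N + ℓ := by
  classical
  set 𝔪 := maximalIdeal A with h𝔪
  set W : Ideal A := (⊥ : Ideal A).colon 𝔪 with hWdef
  obtain ⟨S, hS⟩ : W.FG := IsNoetherian.noetherian W
  set lst := S.toList with hlst
  set ℓ := lst.length with hℓ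
  refine ⟨ℓ, ?_⟩
  intro N hN
  -- basic products
  have hWkill : ∀ z ∈ W, ∀ r ∈ 𝔪, z * r = 0 := by
    intro z hz r hr
    have := Submodule.mem_colon.mp hz r hr
    simpa using this
  have hWmul : W * 𝔪 = ⊥ := by
    rw [eq_bot_iff]
    exact Ideal.mul_le.mpr fun w hw r hr => by
      rw [Submodule.mem_bot]; exact hWkill w hw r hr
  have h𝔪W : 𝔪 * W = ⊥ := by rw [mul_comm]; exact hWmul
  -- list facts
  set w : ℕ → A := fun t => lst.getD t 0 with hwdef
  have hwmem : ∀ t < ℓ, w t ∈ W := by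
    intro t ht
    have : w t ∈ lst := by
      rw [hwdef]; simp only []
      rw [List.getD_eq_getElem lst 0 ht]
      exact List.getElem_mem ht
    rw [← hS]
    exact Ideal.subset_span (Finset.mem_coe.mpr (Finset.mem_toList.mp this))
  set T : ℕ → Ideal A := fun j => Ideal.span {x | x ∈ lst.take j} with hTdef
  have hT0 : T 0 = ⊥ := by
    simp [hTdef, Ideal.span_eq_bot]
  have hTle : ∀ j, T j ≤ W := by
    intro j
    rw [hTdef]
    refine Ideal.span_le.mpr ?_
    intro x hx
    have : x ∈ lst := List.take_subset _ _ hx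
    rw [← hS]
    exact Ideal.subset_span (Finset.mem_coe.mpr (Finset.mem_toList.mp this))
  have hTstep : ∀ j < ℓ, T (j + 1) = T j ⊔ Ideal.span {w j} := by
    intro j hj
    rw [hTdef]
    simp only []
    have : lst.take (j + 1) = lst.take j ++ [w j] := by
      rw [List.take_succ, List.getElem?_eq_getElem hj,
        show w j = lst[j] from List.getD_eq_getElem lst 0 hj]
      rfl
    rw [this]
    have hset : {x | x ∈ lst.take j ++ [w j]} = {x | x ∈ lst.take j} ∪ {w j} := by
      ext x; simp [List.mem_append, or_comm]
    rw [hset, Ideal.span_union, Ideal.span]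
  have hTtop : T ℓ = W := by
    rw [hTdef]
    simp only [hℓ, List.take_length]
    rw [← hS]
    congr 1
    ext x; simp [hlst, Finset.mem_toList]
  -- powers of m
  have hsm : Ideal.span {m} ≤ 𝔪 := (Ideal.span_singleton_le_iff_mem _).mpr hm
  have hmk𝔪 : ∀ k : ℕ, 1 ≤ k → m ^ k ∈ 𝔪 := by
    intro k hk
    cases k with
    | zero => omega
    | succ k => rw [pow_succ]; exact Ideal.mul_mem_left _ _ hm
  have hbase : 𝔪 ^ 2 ≤ Ideal.span {m ^ 2} := by
    have h1 : 𝔪 ^ 2 ≤ (Ideal.span {m} ⊔ W) * (Ideal.span {m} ⊔ W) := by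
      rw [pow_two]; exact Ideal.mul_mono hW hW
    refine h1.trans ?_
    rw [Ideal.sup_mul, Ideal.mul_sup, Ideal.mul_sup, Ideal.span_singleton_mul_span_singleton,
      ← pow_two]
    refine sup_le (sup_le le_rfl ?_) (sup_le ?_ ?_)
    · exact le_trans (Ideal.mul_mono_left hsm) (by rw [h𝔪W]; exact bot_le)
    · exact le_trans (Ideal.mul_mono_right hsm) (by rw [hWmul]; exact bot_le)
    · exact le_trans (Ideal.mul_mono_right hWm) (by rw [hWmul]; exact bot_le)
  have hpow : ∀ k : ℕ, 2 ≤ k → 𝔪 ^ k ≤ Ideal.span {m ^ k} := by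
    intro k hk
    induction k, hk using Nat.le_induction with
    | base => exact hbase
    | succ k hk ih =>
      rw [pow_succ]
      refine (Ideal.mul_mono ih hW).trans ?_
      rw [Ideal.mul_sup, Ideal.span_singleton_mul_span_singleton, ← pow_succ]
      refine sup_le le_rfl ?_
      refine (Ideal.mul_mono_left ((Ideal.span_singleton_le_iff_mem _).mpr
        (hmk𝔪 k (by omega)))).trans ?_
      rw [h𝔪W]; exact bot_le
  -- the filtration
  set L := N + ℓ with hLdef
  set J : ℕ → Ideal A := fun i =>
    if i + 2 ≤ N then 𝔪 ^ (N - i)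
    else if i ≤ N - 2 + ℓ then 𝔪 ^ 2 ⊔ T (i - (N - 2))
    else if i ≤ N - 1 + ℓ then 𝔪
    else ⊤ with hJdef
  have hJ1 : ∀ i, i + 2 ≤ N → J i = 𝔪 ^ (N - i) := by
    intro i hi; simp only [hJdef]; rw [if_pos hi]
  have hJ2 : ∀ i, N - 2 ≤ i → i ≤ N - 2 + ℓ → J i = 𝔪 ^ 2 ⊔ T (i - (N - 2)) := by
    intro i hi1 hi2
    rcases Nat.lt_or_ge i (N - 1) with hc | hc
    · have hieq : i = N - 2 := by omega
      simp only [hJdef]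
      rw [if_pos (by omega)]
      have : N - i = 2 := by omega
      rw [this, hieq, Nat.sub_self, hT0, sup_bot_eq]
    · simp only [hJdef]
      rw [if_neg (by omega), if_pos hi2]
  have hJ3 : J (N - 1 + ℓ) = 𝔪 := by
    simp only [hJdef]
    rw [if_neg (by omega), if_neg (by omega), if_pos (by omega)]
  have hJ4 : ∀ i, N + ℓ ≤ i → J i = ⊤ := by
    intro i hi
    simp only [hJdef]
    rw [if_neg (by omega), if_neg (by omega), if_neg (by omega)]
  have hJ0 : J 0 = 𝔪 ^ N := by rw [hJ1 0 (by omega), Nat.sub_zero]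
  have hJtop : J L = ⊤ := hJ4 L (by omega)
  have hT1le : ∀ t, T t ≤ 𝔪 := fun t => (hTle t).trans hWm
  have hJmono : ∀ j, J j ≤ J (j + 1) := by
    intro j
    rcases Nat.lt_or_ge (j + 3) (N + 1) with h1 | h1
    · rw [hJ1 j (by omega), hJ1 (j + 1) (by omega)]
      exact Ideal.pow_le_pow_right (by omega)
    rcases Nat.lt_or_ge j (N - 2 + ℓ) with h2 | h2
    · -- j between N-2 and N-2+ℓ-1 : second zone (note j ≥ N-2 here)
      have hge : N - 2 ≤ j := by omega
      have hle : j + 1 ≤ N - 2 + ℓ := by omega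
      rw [hJ2 j hge (by omega), hJ2 (j + 1) (by omega) hle]
      have : (j + 1) - (N - 2) = (j - (N - 2)) + 1 := by omega
      rw [this, hTstep _ (by omega)]
      rw [← sup_assoc]
      exact le_sup_left
    rcases Nat.lt_or_ge j (N - 1 + ℓ) with h2' | h2'
    · -- j = N - 2 + ℓ
      have hje : j = N - 2 + ℓ := by omega
      rw [hJ2 j (by omega) (by omega), show j + 1 = N - 1 + ℓ by omega, hJ3]
      exact sup_le (Ideal.pow_le_self (by omega)) (hT1le _)
    rcases Nat.lt_or_ge j (N + ℓ) with h3 | h3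
    · -- j = N-1+ℓ or j = N-2+ℓ with boundary... cases
      rcases Nat.lt_or_ge j (N - 1 + ℓ + 1) with h4 | h4
      · -- j = N-1+ℓ? no : h2 : j ≥ N-1+ℓ and h4: j ≤ N-1+ℓ: j = N-1+ℓ
        have : j = N - 1 + ℓ := by omega
        rw [this, hJ3, hJ4 (N - 1 + ℓ + 1) (by omega)]
        exact le_top
      · rw [hJ4 j (by omega), hJ4 (j + 1) (by omega)]
    · rw [hJ4 j (by omega), hJ4 (j + 1) (by omega)]
  have hsimpleJ : ∀ j, j < L → ∀ K, J j ≤ K → K ≤ J (j + 1) → K = J j ∨ K = J (j + 1) := by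
    intro j hjL
    rcases Nat.lt_or_ge (j + 3) (N + 1) with h1 | h1
    · have e1 : J j = 𝔪 ^ (N - j - 1 + 1) := by
        rw [hJ1 j (by omega)]; congr 1; omega
      have e2 : J (j + 1) = 𝔪 ^ (N - j - 1) := by
        have h' : N - (j + 1) = N - j - 1 := by omega
        rw [hJ1 (j + 1) (by omega), h']
      rw [e1, e2]
      refine simple_interval _ _ (m ^ (N - j - 1)) ?_ ?_
      · exact (hpow _ (by omega)).trans le_sup_right
      · intro r hr
        rw [pow_succ']
        exact Ideal.mul_mem_mul hr (Ideal.pow_mem_pow hm _)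
    rcases Nat.lt_or_ge j (N - 2 + ℓ) with h2 | h2
    · have e1 : J j = 𝔪 ^ 2 ⊔ T (j - (N - 2)) := hJ2 j (by omega) (by omega)
      have e2 : J (j + 1) = (𝔪 ^ 2 ⊔ T (j - (N - 2))) ⊔ Ideal.span {w (j - (N - 2))} := by
        rw [hJ2 (j + 1) (by omega) (by omega), show (j + 1) - (N - 2) = (j - (N - 2)) + 1 by omega,
          hTstep _ (by omega), sup_assoc]
      rw [e1, e2]
      refine simple_interval _ _ _ le_rfl ?_
      intro r hr
      rw [mul_comm, hWkill _ (hwmem _ (by omega)) r hr]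
      exact Submodule.zero_mem _
    rcases Nat.lt_or_ge j (N - 1 + ℓ) with h3 | h3
    · have hje : j = N - 2 + ℓ := by omega
      have e1 : J j = 𝔪 ^ 2 ⊔ T ℓ := by rw [hJ2 j (by omega) (by omega), hje]; congr 2; omega
      have e2 : J (j + 1) = 𝔪 := by rw [show j + 1 = N - 1 + ℓ by omega, hJ3]
      rw [e1, e2]
      refine simple_interval _ _ m ?_ ?_
      · refine hW.trans (sup_le le_sup_right ?_)
        rw [← hTtop]
        exact le_trans le_sup_right le_sup_left
      · intro r hr
        exact Submodule.mem_sup_left (show r * m ∈ 𝔪 ^ 2 by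
          rw [pow_two]; exact Ideal.mul_mem_mul hr hm)
    · have hje : j = N - 1 + ℓ := by omega
      have e1 : J j = 𝔪 := by rw [hje, hJ3]
      have e2 : J (j + 1) = ⊤ := hJ4 _ (by omega)
      rw [e1, e2]
      refine simple_interval _ _ 1 ?_ ?_
      · rw [Ideal.span_singleton_one]; exact le_sup_right
      · intro r hr; rwa [mul_one]
  -- chain bound in the quotient module
  have main : ∀ p : LTSeries (Submodule A (A ⧸ 𝔪 ^ N)), p.length ≤ L := by
    intro p
    set c := p.length with hc
    set q := Submodule.mkQ (𝔪 ^ N) with hq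
    set X : ℕ → Ideal A := fun i => Submodule.comap q (p ⟨min i c, by omega⟩) with hXdef
    have hXstrict : ∀ i, i < c → X i < X (i + 1) := by
      intro i hi
      have h1 : p ⟨min i c, by omega⟩ < p ⟨min (i + 1) c, by omega⟩ := by
        apply p.strictMono
        rw [Fin.mk_lt_mk]
        omega
      refine lt_of_le_of_ne (Submodule.comap_mono h1.le) ?_
      intro hEq
      exact h1.ne (Submodule.comap_injective_of_surjective (Submodule.mkQ_surjective _) hEq)
    refine chain_count J X hJmono hsimpleJ hXstrict ?_ ?_
    · intro i hi
      rw [hJ0]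
      calc 𝔪 ^ N = Submodule.comap q ⊥ := by rw [Submodule.comap_bot, Submodule.ker_mkQ]
      _ ≤ X i := Submodule.comap_mono bot_le
    · intro i hi
      rw [hJtop]
      exact le_top
  have hkd : Order.krullDim (Submodule A (A ⧸ 𝔪 ^ N)) ≤ ((L : ℕ∞) : WithBot ℕ∞) := by
    refine iSup_le fun p => ?_
    exact_mod_cast main p
  exact unbot'_toNat_le hkd

end P3

section P4
variable {A : Type*} [CommRing A] [IsLocalRing A] [IsNoetherianRing A]

lemma mult_le_one_contra {e ℓ : ℕ}
    (hlim : Filter.Tendsto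
      (fun n : ℕ =>
        (((Nat.factorial 1 : ℕ) : ℝ) *
          ((moduleLength A (A ⧸ (maximalIdeal A) ^ n)).toNat : ℝ)) / (n : ℝ) ^ 1)
      Filter.atTop (nhds (e : ℝ)))
    (hbound : ∀ N, 2 ≤ N → (moduleLength A (A ⧸ (maximalIdeal A) ^ N)).toNat ≤ N + ℓ)
    (he : 1 < e) : False := by
  have hg : Filter.Tendsto (fun n : ℕ => 1 + (ℓ : ℝ) / n) Filter.atTop (nhds (1 + 0)) :=
    tendsto_const_nhds.add (tendsto_const_div_atTop_nhds_zero_nat (ℓ : ℝ))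
  have hle : (e : ℝ) ≤ 1 + 0 := by
    refine le_of_tendsto_of_tendsto hlim hg ?_
    filter_upwards [Filter.eventually_ge_atTop 2] with n hn
    have hb := hbound n hn
    have hn0 : (0 : ℝ) < n := by
      have : (2 : ℝ) ≤ n := by exact_mod_cast hn
      linarith
    simp only [Nat.factorial_one, Nat.cast_one, one_mul, pow_one]
    rw [div_le_iff₀ hn0]
    have hcast : ((moduleLength A (A ⧸ (maximalIdeal A) ^ n)).toNat : ℝ) ≤ (n : ℝ) + ℓ := by
      exact_mod_cast hb
    calc ((moduleLength A (A ⧸ (maximalIdeal A) ^ n)).toNat : ℝ) ≤ (n : ℝ) + ℓ := hcast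
    _ = (1 + (ℓ : ℝ) / n) * n := by field_simp
  have : (2 : ℝ) ≤ (e : ℝ) := by exact_mod_cast he
  linarith


end P4

end AuxStmt14

theorem stmt14 {A : Type*} [CommRing A] [IsLocalRing A] [IsNoetherianRing A]
    (hB : IsBuchsbaum A) (hdim : ringKrullDim A = 1)
    (he : ∃ e : ℕ, HasHSMultiplicity A e ∧ 1 < e)
    (a : A) (hQ : IsParameterIdeal A (Ideal.span {a}))
    (I : Ideal A) (hI : I = (Ideal.span {a}).colon (maximalIdeal A))
    (n : ℕ)
    (h : (I ^ (n + 1)).colon (Ideal.span {a ^ n}) =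
      (I ^ (n + 2)).colon (Ideal.span {a ^ (n + 1)})) :
    I ^ (n + 2) = Ideal.span {a} * I ^ (n + 1) := by
  obtain ⟨e, ⟨d, hd, hlim⟩, he1⟩ := he
  have hd1 : d = 1 := by
    rw [hdim] at hd
    exact_mod_cast hd.symm
  subst hd1
  obtain ⟨d', x, ⟨hx1, hx2⟩, hax⟩ := hQ
  have hrad : (Ideal.span {a}).radical = maximalIdeal A := by rw [hax]; exact hx2
  have ha𝔪 : a ∈ maximalIdeal A := by
    rw [← hrad]
    exact Ideal.le_radical (Ideal.mem_span_singleton_self a)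
  have hWa : ∀ k : ℕ, ∀ z : A, z * a ^ k = 0 → z ∈ (⊥ : Ideal A).colon (maximalIdeal A) := by
    intro k z hz
    cases k with
    | zero =>
      have : z = 0 := by simpa using hz
      rw [this]; exact Submodule.zero_mem _
    | succ k =>
      have hradk : (Ideal.span {a ^ (k + 1)}).radical = maximalIdeal A := by
        rw [← Ideal.span_singleton_pow]
        have hrp : (Ideal.span {a} ^ (k + 1)).radical = (Ideal.span {a}).radical :=
          Ideal.radical_pow (Ideal.span {a}) (Nat.succ_ne_zero k)
        rw [hrp, hrad]
      have hcolon := buchs_ann hB hdim hradk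
      have hmem : z ∈ (⊥ : Ideal A).colon (Ideal.span {a ^ (k + 1)}) :=
        Ideal.mem_colon_span_singleton.mpr (by rw [hz]; exact Submodule.zero_mem _)
      rwa [hcolon] at hmem
  have hW0 : ∀ z ∈ (⊥ : Ideal A).colon (maximalIdeal A), ∀ r ∈ maximalIdeal A, z * r = 0 :=
    fun z hz r hr => by simpa using Submodule.mem_colon.mp hz r hr
  have hdim0 : (maximalIdeal A ^ 2 = ⊥) → False := dim0_absurd hdim
  have hW𝔪 : (⊥ : Ideal A).colon (maximalIdeal A) ≤ maximalIdeal A := by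
    by_contra hc
    obtain ⟨z, hzW, hz𝔪⟩ := SetLike.not_le_iff_exists.mp hc
    obtain ⟨u, rfl⟩ := IsLocalRing.notMem_maximalIdeal.mp hz𝔪
    have h𝔪bot : maximalIdeal A = ⊥ := by
      rw [eq_bot_iff]; intro r hr
      have hur := hW0 _ hzW r hr
      have hr0 : r = 0 := by
        calc r = ((u⁻¹ : Aˣ) : A) * ((u : A) * r) := by
              rw [← mul_assoc, Units.inv_mul, one_mul]
        _ = 0 := by rw [hur, mul_zero]
      simp [hr0]
    exact hdim0 (by rw [h𝔪bot, ← Ideal.zero_eq_bot, pow_two, mul_zero])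
  have hcase2 : ∀ mm ∈ maximalIdeal A,
      maximalIdeal A ≤ Ideal.span {mm} ⊔ (⊥ : Ideal A).colon (maximalIdeal A) → False := by
    intro mm hmm hsub
    obtain ⟨ℓ, hbd⟩ := length_bound mm hmm hW𝔪 hsub
    exact mult_le_one_contra hlim hbd he1
  -- Lemma A : I * 𝔪 ≤ (a) * 𝔪
  have hA : I * maximalIdeal A ≤ Ideal.span {a} * maximalIdeal A := by
    refine Ideal.mul_le.mpr ?_
    intro y hy mm hmm'
    have hym : ∀ p ∈ maximalIdeal A, y * p ∈ Ideal.span {a} := by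
      intro p hp
      have hy' : y ∈ (Ideal.span {a}).colon (maximalIdeal A) := by rw [← hI]; exact hy
      simpa using Submodule.mem_colon.mp hy' p hp
    obtain ⟨s, hs⟩ := Ideal.mem_span_singleton'.mp (hym mm hmm')
    by_cases hsm : s ∈ maximalIdeal A
    · have hmul : a * s ∈ Ideal.span {a} * maximalIdeal A :=
        Ideal.mul_mem_mul (Ideal.mem_span_singleton_self a) hsm
      rwa [show a * s = y * mm by rw [← hs]; ring] at hmul
    · exfalso
      obtain ⟨u, rfl⟩ := IsLocalRing.notMem_maximalIdeal.mp hsm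
      refine hcase2 mm hmm' ?_
      intro p hp
      obtain ⟨s', hs'⟩ := Ideal.mem_span_singleton'.mp (hym p hp)
      have huinv : (u : A) * ((u⁻¹ : Aˣ) : A) = 1 := by exact_mod_cast u.mul_inv
      have hz : (p - ((u⁻¹ : Aˣ) : A) * s' * mm) * y = 0 := by
        linear_combination (-1 : A) * hs' + ((u⁻¹ : Aˣ) : A) * s' * hs - s' * a * huinv
      have hza : (p - ((u⁻¹ : Aˣ) : A) * s' * mm) * a ^ 1 = 0 := by
        have ha' : a = ((u⁻¹ : Aˣ) : A) * (y * mm) := by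
          rw [← hs, ← mul_assoc, Units.inv_mul, one_mul]
        rw [pow_one, ha',
          show (p - ((u⁻¹ : Aˣ) : A) * s' * mm) * (((u⁻¹ : Aˣ) : A) * (y * mm)) =
            ((u⁻¹ : Aˣ) : A) * mm * ((p - ((u⁻¹ : Aˣ) : A) * s' * mm) * y) by ring,
          hz, mul_zero]
      have hzW := hWa 1 _ hza
      have hpdecomp : p = (((u⁻¹ : Aˣ) : A) * s' * mm) + (p - ((u⁻¹ : Aˣ) : A) * s' * mm) := by
        ring
      rw [hpdecomp]
      exact Submodule.add_mem _
        (Submodule.mem_sup_left (Ideal.mem_span_singleton'.mpr ⟨_, rfl⟩))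
        (Submodule.mem_sup_right hzW)
  -- Lemma B
  have hBpow : ∀ k : ℕ, I ^ (k + 1) * maximalIdeal A ≤
      Ideal.span {a} ^ (k + 1) * maximalIdeal A := by
    intro k
    induction k with
    | zero => simpa [pow_one] using hA
    | succ k ih =>
      calc I ^ (k + 2) * maximalIdeal A = I ^ (k + 1) * (I * maximalIdeal A) := by ring
      _ ≤ I ^ (k + 1) * (Ideal.span {a} * maximalIdeal A) := Ideal.mul_mono_right hA
      _ = Ideal.span {a} * (I ^ (k + 1) * maximalIdeal A) := by ring
      _ ≤ Ideal.span {a} * (Ideal.span {a} ^ (k + 1) * maximalIdeal A) :=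
          Ideal.mul_mono_right ih
      _ = Ideal.span {a} ^ (k + 2) * maximalIdeal A := by ring
  -- Lemma C
  have hC : a ^ n ∉ I ^ (n + 1) := by
    intro hmem
    have h1 : ∀ p ∈ maximalIdeal A, ∃ q ∈ maximalIdeal A,
        p - a * q ∈ (⊥ : Ideal A).colon (maximalIdeal A) := by
      intro p hp
      have h2 : a ^ n * p ∈ Ideal.span {a ^ (n + 1)} * maximalIdeal A := by
        have h3 : a ^ n * p ∈ I ^ (n + 1) * maximalIdeal A := Ideal.mul_mem_mul hmem hp
        have h4 := hBpow n h3
        rwa [Ideal.span_singleton_pow] at h4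
      obtain ⟨q, hq, hqe⟩ := Ideal.mem_span_singleton_mul.mp h2
      refine ⟨q, hq, hWa n _ ?_⟩
      calc (p - a * q) * a ^ n = a ^ n * p - a ^ (n + 1) * q := by ring
      _ = 0 := by rw [← hqe]; ring
    have h𝔪2 : maximalIdeal A ^ 2 ≤ Ideal.span {a} * maximalIdeal A ^ 2 := by
      rw [pow_two]
      refine Ideal.mul_le.mpr ?_
      intro p1 hp1 p2 hp2
      obtain ⟨q, hq, hzmem⟩ := h1 p1 hp1
      have hzz : (p1 - a * q) * p2 = 0 := hW0 _ hzmem p2 hp2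
      have hsplit : p1 * p2 = a * (q * p2) + (p1 - a * q) * p2 := by ring
      rw [hsplit, hzz, add_zero]
      refine Ideal.mul_mem_mul (Ideal.mem_span_singleton_self a) ?_
      exact Ideal.mul_mem_mul hq hp2
    have hNak : maximalIdeal A ^ 2 = ⊥ := by
      refine Submodule.eq_bot_of_le_smul_of_le_jacobson_bot (maximalIdeal A)
        (maximalIdeal A ^ 2) (IsNoetherian.noetherian _) ?_
        (IsLocalRing.maximalIdeal_le_jacobson ⊥)
      refine h𝔪2.trans ?_
      rw [Ideal.smul_eq_mul]
      exact Ideal.mul_mono_left ((Ideal.span_singleton_le_iff_mem _).mpr ha𝔪)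
    exact hdim0 hNak
  have hIne : I ≠ ⊤ := by
    intro hIt
    exact hC (by rw [hIt, Ideal.top_pow]; exact Submodule.mem_top)
  have hI𝔪 : I ≤ maximalIdeal A := IsLocalRing.le_maximalIdeal hIne
  refine le_antisymm ?_ ?_
  · intro xx hx
    have hx2 : xx ∈ Ideal.span {a ^ (n + 1)} * maximalIdeal A := by
      have h4 : I ^ (n + 2) ≤ I ^ (n + 1) * maximalIdeal A := by
        rw [pow_succ]
        exact Ideal.mul_mono_right hI𝔪
      have h5 := hBpow n (h4 hx)
      rwa [Ideal.span_singleton_pow] at h5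
    obtain ⟨z, hz𝔪, hzx⟩ := Ideal.mem_span_singleton_mul.mp hx2
    have hzcolon : z ∈ (I ^ (n + 2)).colon (Ideal.span {a ^ (n + 1)}) :=
      Ideal.mem_colon_span_singleton.mpr
        (by rw [mul_comm, hzx]; exact hx)
    rw [← h] at hzcolon
    have hz2 : z * a ^ n ∈ I ^ (n + 1) := by
      simpa [smul_eq_mul] using Ideal.mem_colon_span_singleton.mp hzcolon
    have hfin : a * (z * a ^ n) ∈ Ideal.span {a} * I ^ (n + 1) :=
      Ideal.mul_mem_mul (Ideal.mem_span_singleton_self a) hz2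
    rwa [show a * (z * a ^ n) = xx by rw [← hzx]; ring] at hfin
  · have haI : Ideal.span {a} ≤ I := by
      rw [Ideal.span_singleton_le_iff_mem, hI]
      exact Submodule.mem_colon.mpr fun p hp => by
        rw [smul_eq_mul]
        exact Ideal.mem_span_singleton'.mpr ⟨p, by ring⟩
    calc Ideal.span {a} * I ^ (n + 1) ≤ I * I ^ (n + 1) := Ideal.mul_mono_left haI
    _ = I ^ (n + 2) := by rw [← pow_succ']
end
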